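/- Let p,q∈ℂ with |p|<1 and |q|<1. Then (1-u)·Γ(u;p,q) tends to 1/((p;p)_∞·(q;q)_∞) as u→1 (u≠1), i.e. the function u ↦ (1-u)Γ(u;p,q) has limit 1/((p;p)_∞(q;q)_∞) along the punctured neighborhood filter at u=1. -/

import Mathlib

open scoped BigOperators Topology
open Finset MeasureTheory

noncomputable section

/-- `(u;p)_∞ = ∏_{i≥0} (1 - p^i u)`. -/
def poch (u p : ℂ) : ℂ := ∏' i : ℕ, (1 - p ^ i * u)

/-- `(u;p,q)_∞ = ∏_{i,j≥0} (1 - p^i q^j u)`. -/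
def poch2 (u p q : ℂ) : ℂ := ∏' ij : ℕ × ℕ, (1 - p ^ ij.1 * q ^ ij.2 * u)

/-- The multiplicative theta function `θ(u;p)`. -/
def theta (u p : ℂ) : ℂ := poch u p * poch (p / u) p

/-- The elliptic gamma function `Γ(u;p,q)`. -/
def ellGamma (u p q : ℂ) : ℂ := poch2 (p * q / u) p q / poch2 u p q

/-- `e(u,v;p) = u⁻¹ θ(uv;p) θ(u/v;p)`. -/
def efun (p t u v : ℂ) : ℂ := u⁻¹ * theta (u * v) p * theta (u / v) p

/-- `θ(u;p)_{t,k}`. -/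
def thetaFac (p t u : ℂ) (k : ℕ) : ℂ := ∏ j ∈ Finset.range k, theta (t ^ j * u) p

/-- `e(u,v;p)_{t,k}`. -/
def efunFac (p t u v : ℂ) (k : ℕ) : ℂ := ∏ j ∈ Finset.range k, efun p t (t ^ j * u) v

/-- The number of indices `j < i` with `k j = l`. -/
def cnt {n s : ℕ} (k : Fin n → Fin s) (i : ℕ) (l : Fin s) : ℕ :=
  (Finset.univ.filter (fun j : Fin n => (j : ℕ) < i ∧ k j = l)).card

/-- The elliptic interpolation function `E_μ(c;z;p)` of type `BC_n`. -/
def interpE (p t : ℂ) {s n : ℕ} (c : Fin s → ℂ) (z : Fin n → ℂ) (μ : Fin s → ℕ) : ℂ :=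
  ∑ k : Fin n → Fin s,
    if ∀ l, cnt k n l = μ l then
      ∏ i : Fin n, ∏ l ∈ Finset.univ.filter (fun l => l ≠ k i),
        efun p t (z i) (t ^ cnt k ((i : ℕ) + 1) l * c l) /
          efun p t (t ^ cnt k (i : ℕ) (k i) * c (k i)) (t ^ cnt k (i : ℕ) l * c l)
    else 0

/-- `Z_{s,n}`, the multi-indices `μ ∈ ℕ^s` with `|μ| = n`. -/
abbrev Zidx (s n : ℕ) := {μ : Fin s → ℕ // ∑ i, μ i = n}

instance (s n : ℕ) : Fintype (Zidx s n) :=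
  Fintype.subtype (Finset.Nat.antidiagonalTuple s n)
    (fun μ => Finset.Nat.mem_antidiagonalTuple)

/-- The `BC_n` elliptic hypergeometric kernel `Φ(z;a;p,q)`. -/
def PhiBC (p q t : ℂ) {n m : ℕ} (a : Fin m → ℂ) (z : Fin n → ℂ) : ℂ :=
  (∏ i, (∏ k, ellGamma (a k * z i) p q * ellGamma (a k * (z i)⁻¹) p q) /
      (ellGamma (z i ^ 2) p q * ellGamma ((z i)⁻¹ ^ 2) p q)) *
  ∏ i, ∏ j ∈ Finset.univ.filter (fun j => i < j),
    (ellGamma (t * (z i * z j)) p q * ellGamma (t * (z i / z j)) p q *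
        ellGamma (t * (z j / z i)) p q * ellGamma (t / (z i * z j)) p q) /
      (ellGamma (z i * z j) p q * ellGamma (z i / z j) p q *
        ellGamma (z j / z i) p q * ellGamma ((z i * z j)⁻¹) p q)

/-- `∫_{T^n} f(z) ω_n(z)` where `ω_n(z) = dz/((2πi)^n z₁⋯z_n)`. -/
def torusInt (n : ℕ) (f : (Fin n → ℂ) → ℂ) : ℂ :=
  (1 / (2 * (Real.pi : ℂ))) ^ n *
    ∫ θ : Fin n → ℝ in Set.univ.pi fun _ : Fin n => Set.Icc (0 : ℝ) (2 * Real.pi),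
      f fun i => Complex.exp (Complex.I * (θ i : ℂ))


open Complex Filter

lemma aux_tprod_one_sub {ι : Type*} (c : ι → ℂ) (hc : Summable fun i => ‖c i‖)
    {s : Set ℂ} {a B : ℝ} (ha0 : 0 ≤ a) (ha : a < 1)
    (hbound : ∀ i, ∀ v ∈ s, ‖c i * v‖ ≤ a) (hBs : ∀ v ∈ s, ‖v‖ ≤ B) :
    ContinuousOn (fun v => ∏' i, (1 - c i * v)) s ∧
      ∀ v ∈ s, ((∏' i, (1 - c i * v)) ≠ 0 ∧ Multipliable fun i => 1 - c i * v) := by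
  classical
  have hmem : ∀ i, ∀ v ∈ s, 1 - c i * v ∈ slitPlane := by
    intro i v hv
    have h1 : ‖-(c i * v)‖ < 1 := by
      rw [norm_neg]; exact lt_of_le_of_lt (hbound i v hv) ha
    simpa [sub_eq_add_neg] using mem_slitPlane_of_norm_lt_one h1
  have hne : ∀ i, ∀ v ∈ s, 1 - c i * v ≠ 0 := fun i v hv => slitPlane_ne_zero (hmem i v hv)
  have ha1 : (0:ℝ) < 1 - a := by linarith
  set K : ℝ := B * (a * (1 - a)⁻¹ / 2 + 1) with hK
  have hlog : ∀ i, ∀ v ∈ s, ‖Complex.log (1 - c i * v)‖ ≤ ‖c i‖ * K := by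
    intro i v hv
    set z : ℂ := -(c i * v) with hz
    have h1 : ‖z‖ ≤ a := by rw [hz, norm_neg]; exact hbound i v hv
    have h1' : ‖z‖ < 1 := h1.trans_lt ha
    have hinv : (1 - ‖z‖)⁻¹ ≤ (1 - a)⁻¹ := by
      apply inv_anti₀ ha1; linarith
    have hle := Complex.norm_log_one_add_le h1'
    have heq : (1 : ℂ) + z = 1 - c i * v := by rw [hz]; ring
    rw [heq] at hle
    have hzB : ‖z‖ ≤ ‖c i‖ * B := by
      rw [hz, norm_neg, norm_mul]
      exact mul_le_mul_of_nonneg_left (hBs v hv) (norm_nonneg _)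
    calc ‖Complex.log (1 - c i * v)‖ ≤ ‖z‖ ^ 2 * (1 - ‖z‖)⁻¹ / 2 + ‖z‖ := hle
      _ ≤ ‖z‖ * a * (1 - a)⁻¹ / 2 + ‖z‖ := by
          rw [sq]
          gcongr <;> first | exact h1 | exact hinv | exact inv_nonneg.mpr (by linarith) | positivity
      _ = ‖z‖ * (a * (1 - a)⁻¹ / 2 + 1) := by ring
      _ ≤ (‖c i‖ * B) * (a * (1 - a)⁻¹ / 2 + 1) := by
          apply mul_le_mul_of_nonneg_right hzB
          positivity
      _ = ‖c i‖ * K := by rw [hK]; ring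
  have hu : Summable fun i => ‖c i‖ * K := hc.mul_right K
  have hslog : ∀ v ∈ s, Summable fun i => Complex.log (1 - c i * v) := fun v hv =>
    Summable.of_norm_bounded hu (fun i => hlog i v hv)
  have hts : ContinuousOn (fun v => ∑' i, Complex.log (1 - c i * v)) s := by
    apply continuousOn_tsum (u := fun i => ‖c i‖ * K) ?_ hu (fun i v hv => hlog i v hv)
    intro i
    exact (continuous_const.sub (continuous_const.mul continuous_id)).continuousOn.clog
      (fun v hv => hmem i v hv)
  have hexp := fun (x : s) => Complex.cexp_tsum_eq_tprod (f := fun i => 1 - c i * (x : ℂ))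
      (fun i => hne i x x.2) (hslog x x.2)
  have hprod_eq : ∀ v ∈ s, (∏' i, (1 - c i * v)) =
      Complex.exp (∑' i, Complex.log (1 - c i * v)) := by
    intro v hv
    exact (hexp ⟨v, hv⟩).symm
  refine ⟨?_, fun v hv => ⟨?_, ?_⟩⟩
  · exact ((continuous_exp.comp_continuousOn hts).congr (fun v hv => hprod_eq v hv))
  · rw [hprod_eq v hv]; exact Complex.exp_ne_zero _
  · exact Complex.multipliable_of_summable_log (hslog v hv)


lemma aux_mult_ne {ι : Type*} (c : ι → ℂ) (hc : Summable fun i => ‖c i‖)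
    {a : ℝ} (ha0 : 0 ≤ a) (ha : a < 1) (hle : ∀ i, ‖c i‖ ≤ a) :
    Multipliable (fun i => 1 - c i) ∧ (∏' i, (1 - c i)) ≠ 0 := by
  have hbound : ∀ i, ∀ v ∈ ({1} : Set ℂ), ‖c i * v‖ ≤ a := by
    intro i v hv
    rw [Set.mem_singleton_iff] at hv
    subst hv
    simpa using hle i
  have hBs : ∀ v ∈ ({1} : Set ℂ), ‖v‖ ≤ 1 := by
    intro v hv
    rw [Set.mem_singleton_iff] at hv
    simp [hv]
  obtain ⟨-, hprops⟩ := aux_tprod_one_sub c hc ha0 ha hbound hBs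
  obtain ⟨hne, hm⟩ := hprops 1 rfl
  constructor
  · exact hm.congr (fun i => by rw [mul_one])
  · have : (∏' i, (1 - c i)) = ∏' i, (1 - c i * 1) := tprod_congr (fun i => by rw [mul_one])
    rw [this]
    exact hne

lemma norm_c_le_r (p q : ℂ) (hp : ‖p‖ < 1) (hq : ‖q‖ < 1) (ij : ℕ × ℕ)
    (hij : ij ≠ ((0:ℕ),(0:ℕ))) : ‖p ^ ij.1 * q ^ ij.2‖ ≤ max ‖p‖ ‖q‖ := by
  rcases ij with ⟨i, j⟩
  rw [norm_mul, norm_pow, norm_pow]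
  rcases Nat.eq_zero_or_pos i with hi | hi
  · subst hi
    have hj : 1 ≤ j := by
      rcases Nat.eq_zero_or_pos j with hj0 | hj0
      · exact absurd (by simp [hj0] : ((0:ℕ), j) = ((0:ℕ), (0:ℕ))) hij
      · exact hj0
    calc ‖p‖ ^ 0 * ‖q‖ ^ j = ‖q‖ ^ j := by rw [pow_zero, one_mul]
      _ ≤ ‖q‖ ^ 1 := pow_le_pow_of_le_one (norm_nonneg q) hq.le hj
      _ = ‖q‖ := pow_one _
      _ ≤ max ‖p‖ ‖q‖ := le_max_right _ _
  · have h1 : ‖p‖ ^ i ≤ ‖p‖ := by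
      simpa using pow_le_pow_of_le_one (norm_nonneg p) hp.le hi
    have h2 : ‖q‖ ^ j ≤ 1 := pow_le_one₀ (norm_nonneg q) hq.le
    have h3 : ‖p‖ ^ i * ‖q‖ ^ j ≤ ‖p‖ * 1 :=
      mul_le_mul h1 h2 (by positivity) (norm_nonneg p)
    have h4 : ‖p‖ ≤ max ‖p‖ ‖q‖ := le_max_left _ _
    nlinarith [norm_nonneg p]

lemma summable_c (p q : ℂ) (hp : ‖p‖ < 1) (hq : ‖q‖ < 1) :
    Summable fun ij : ℕ × ℕ => ‖p ^ ij.1 * q ^ ij.2‖ := by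
  have hgeom : ∀ w : ℂ, ‖w‖ < 1 → Summable fun i : ℕ => ‖w ^ i‖ := fun w hw => by
    simpa [norm_pow] using summable_geometric_of_lt_one (norm_nonneg w) hw
  exact Summable.mul_norm (hgeom p hp) (hgeom q hq)

/-- The combinatorial identity: the product over all `(i,j) ≠ (0,0)` of `1 - p^i q^j`
    splits as `(p;p)_∞ (q;q)_∞ (pq;p,q)_∞`. -/
lemma g1_eq (p q : ℂ) (hp : ‖p‖ < 1) (hq : ‖q‖ < 1) :
    (∏' x : (({((0:ℕ),(0:ℕ))} : Set (ℕ × ℕ))ᶜ : Set (ℕ × ℕ)),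
        (1 - p ^ (x : ℕ × ℕ).1 * q ^ (x : ℕ × ℕ).2)) =
      poch p p * poch q q * poch2 (p * q) p q := by
  classical
  have hr0 : 0 ≤ max ‖p‖ ‖q‖ := le_trans (norm_nonneg p) (le_max_left _ _)
  have hr1 : max ‖p‖ ‖q‖ < 1 := max_lt hp hq
  have hmk : ∀ S : Set (ℕ × ℕ), (∀ x ∈ S, x ≠ ((0:ℕ),(0:ℕ))) →
      Multipliable (fun x : S => 1 - p ^ (x : ℕ × ℕ).1 * q ^ (x : ℕ × ℕ).2) :=
    fun S hS => (aux_mult_ne (fun x : S => p ^ (x : ℕ × ℕ).1 * q ^ (x : ℕ × ℕ).2)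
      ((summable_c p q hp hq).subtype S) hr0 hr1
      (fun x => norm_c_le_r p q hp hq x (hS x x.2))).1
  set Ta : Set (ℕ × ℕ) := {x | x.1 ≠ 0 ∧ x.2 = 0} with hTa
  set Tb : Set (ℕ × ℕ) := {x | x.1 = 0 ∧ x.2 ≠ 0} with hTb
  set Tc : Set (ℕ × ℕ) := {x | x.1 ≠ 0 ∧ x.2 ≠ 0} with hTc
  have hTa0 : ∀ x ∈ Ta, x ≠ ((0:ℕ),(0:ℕ)) := fun x hx h => hx.1 (by rw [h])
  have hTb0 : ∀ x ∈ Tb, x ≠ ((0:ℕ),(0:ℕ)) := fun x hx h => hx.2 (by rw [h])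
  have hTc0 : ∀ x ∈ Tc, x ≠ ((0:ℕ),(0:ℕ)) := fun x hx h => hx.1 (by rw [h])
  have hTbc0 : ∀ x ∈ Tb ∪ Tc, x ≠ ((0:ℕ),(0:ℕ)) := by
    intro x hx
    rcases hx with hx | hx
    · exact hTb0 x hx
    · exact hTc0 x hx
  have hunion : (({((0:ℕ),(0:ℕ))} : Set (ℕ × ℕ))ᶜ : Set (ℕ × ℕ)) = Ta ∪ (Tb ∪ Tc) := by
    ext x
    simp only [Set.mem_compl_iff, Set.mem_singleton_iff, Set.mem_union, hTa, hTb, hTc,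
      Set.mem_setOf_eq, Prod.ext_iff]
    tauto
  have hdisj1 : Disjoint Ta (Tb ∪ Tc) := by
    rw [Set.disjoint_left]
    rintro x ⟨h1, h2⟩ (⟨h3, h4⟩ | ⟨h3, h4⟩)
    · exact h1 h3
    · exact h4 h2
  have hdisj2 : Disjoint Tb Tc := by
    rw [Set.disjoint_left]
    rintro x ⟨h1, h2⟩ ⟨h3, h4⟩
    exact h3 h1
  have step1 := tprod_congr_set_coe (fun ij : ℕ × ℕ => 1 - p ^ ij.1 * q ^ ij.2) hunion
  have step2 := Multipliable.tprod_union_disjoint (f := fun ij : ℕ × ℕ => 1 - p ^ ij.1 * q ^ ij.2) hdisj1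
    (hmk Ta hTa0) (hmk (Tb ∪ Tc) hTbc0)
  have step3 := Multipliable.tprod_union_disjoint (f := fun ij : ℕ × ℕ => 1 - p ^ ij.1 * q ^ ij.2) hdisj2
    (hmk Tb hTb0) (hmk Tc hTc0)
  rw [step1, step2, step3]
  have hTaEq : (∏' x : Ta, (1 - p ^ (x : ℕ × ℕ).1 * q ^ (x : ℕ × ℕ).2)) = poch p p := by
    let e : ℕ ≃ Ta :=
      { toFun := fun i => ⟨(i + 1, 0), ⟨Nat.succ_ne_zero i, rfl⟩⟩
        invFun := fun x => (x : ℕ × ℕ).1 - 1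
        left_inv := fun i => by simp
        right_inv := fun x => by
          apply Subtype.ext
          have h1 := x.2.1
          have h2 := x.2.2
          rw [Prod.ext_iff]
          constructor
          · simp only
            omega
          · exact h2.symm }
    rw [← Equiv.tprod_eq e (fun x : Ta => 1 - p ^ (x : ℕ × ℕ).1 * q ^ (x : ℕ × ℕ).2),
      show poch p p = ∏' i : ℕ, (1 - p ^ i * p) from rfl]
    apply tprod_congr
    intro i
    show (1:ℂ) - p ^ (i + 1) * q ^ 0 = 1 - p ^ i * p
    rw [pow_succ, pow_zero, mul_one]
  have hTbEq : (∏' x : Tb, (1 - p ^ (x : ℕ × ℕ).1 * q ^ (x : ℕ × ℕ).2)) = poch q q := by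
    let e : ℕ ≃ Tb :=
      { toFun := fun i => ⟨(0, i + 1), ⟨rfl, Nat.succ_ne_zero i⟩⟩
        invFun := fun x => (x : ℕ × ℕ).2 - 1
        left_inv := fun i => by simp
        right_inv := fun x => by
          apply Subtype.ext
          have h1 := x.2.1
          have h2 := x.2.2
          rw [Prod.ext_iff]
          constructor
          · exact h1.symm
          · simp only
            omega }
    rw [← Equiv.tprod_eq e (fun x : Tb => 1 - p ^ (x : ℕ × ℕ).1 * q ^ (x : ℕ × ℕ).2),
      show poch q q = ∏' i : ℕ, (1 - q ^ i * q) from rfl]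
    apply tprod_congr
    intro i
    show (1:ℂ) - p ^ 0 * q ^ (i + 1) = 1 - q ^ i * q
    rw [pow_succ, pow_zero, one_mul]
  have hTcEq : (∏' x : Tc, (1 - p ^ (x : ℕ × ℕ).1 * q ^ (x : ℕ × ℕ).2)) =
      poch2 (p * q) p q := by
    let e : ℕ × ℕ ≃ Tc :=
      { toFun := fun ij => ⟨(ij.1 + 1, ij.2 + 1), ⟨Nat.succ_ne_zero _, Nat.succ_ne_zero _⟩⟩
        invFun := fun x => ((x : ℕ × ℕ).1 - 1, (x : ℕ × ℕ).2 - 1)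
        left_inv := fun ij => by simp
        right_inv := fun x => by
          apply Subtype.ext
          have h1 := x.2.1
          have h2 := x.2.2
          rw [Prod.ext_iff]
          constructor
          · simp only
            omega
          · simp only
            omega }
    rw [← Equiv.tprod_eq e (fun x : Tc => 1 - p ^ (x : ℕ × ℕ).1 * q ^ (x : ℕ × ℕ).2),
      show poch2 (p * q) p q = ∏' ij : ℕ × ℕ, (1 - p ^ ij.1 * q ^ ij.2 * (p * q)) from rfl]
    apply tprod_congr
    intro ij
    show (1:ℂ) - p ^ (ij.1 + 1) * q ^ (ij.2 + 1) = 1 - p ^ ij.1 * q ^ ij.2 * (p * q)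
    rw [pow_succ, pow_succ]
    ring
  rw [hTaEq, hTbEq, hTcEq]
  ring

/-- `(1-u)Γ(u;p,q) → 1/((p;p)_∞ (q;q)_∞)` as `u → 1`. -/
theorem residue_ellGamma_at_one (p q : ℂ)
    (hp : ‖p‖ < 1) (hq : ‖q‖ < 1) :
    Filter.Tendsto (fun u : ℂ => (1 - u) * ellGamma u p q)
      (𝓝[≠] (1 : ℂ)) (𝓝 ((poch p p * poch q q)⁻¹)) := by
  classical
  have hp' : ‖p‖ < 1 := by exact hp
  have hq' : ‖q‖ < 1 := by exact hq
  set c : ℕ × ℕ → ℂ := fun ij => p ^ ij.1 * q ^ ij.2 with hc_def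
  have hc : Summable fun ij : ℕ × ℕ => ‖c ij‖ := summable_c p q hp' hq'
  have hc1 : ∀ ij : ℕ × ℕ, ‖c ij‖ ≤ 1 := by
    intro ij
    rw [hc_def]
    simp only [norm_mul, norm_pow]
    exact mul_le_one₀ (pow_le_one₀ (norm_nonneg p) hp'.le) (by positivity)
      (pow_le_one₀ (norm_nonneg q) hq'.le)
  set r : ℝ := max ‖p‖ ‖q‖ with hr_def
  have hr1 : r < 1 := max_lt hp' hq'
  have hr0 : 0 ≤ r := le_trans (norm_nonneg p) (le_max_left _ _)
  set δ : ℝ := (1 - r) / 2 with hδ_def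
  have hδ : 0 < δ := by rw [hδ_def]; linarith
  set B₂ : ℝ := 1 + δ with hB₂_def
  set a₂ : ℝ := r * B₂ with ha₂_def
  have ha₂0 : 0 ≤ a₂ := by rw [ha₂_def, hB₂_def]; positivity
  have ha₂ : a₂ < 1 := by rw [ha₂_def, hB₂_def, hδ_def]; nlinarith
  set s₂ : Set ℂ := Metric.closedBall (1:ℂ) δ with hs₂_def
  have hB₂s : ∀ v ∈ s₂, ‖v‖ ≤ B₂ := by
    intro v hv
    rw [hs₂_def, Metric.mem_closedBall, dist_eq_norm] at hv
    calc ‖v‖ = ‖1 + (v - 1)‖ := by congr 1; ring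
      _ ≤ ‖(1:ℂ)‖ + ‖v - 1‖ := norm_add_le _ _
      _ ≤ 1 + δ := by rw [norm_one]; linarith
  set T : Set (ℕ × ℕ) := ({((0:ℕ),(0:ℕ))} : Set (ℕ × ℕ))ᶜ with hT_def
  have hTne : ∀ x ∈ T, x ≠ ((0:ℕ),(0:ℕ)) := by
    intro x hx
    simpa [hT_def] using hx
  have hauxT : ContinuousOn (fun u => ∏' x : T, (1 - c x * u)) s₂ ∧
      ∀ v ∈ s₂, ((∏' x : T, (1 - c x * v)) ≠ 0 ∧ Multipliable fun x : T => 1 - c x * v) := by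
    apply aux_tprod_one_sub (fun x : T => c x) (hc.subtype T) ha₂0 ha₂ ?_ hB₂s
    intro x v hv
    rw [norm_mul, ha₂_def]
    exact mul_le_mul (norm_c_le_r p q hp' hq' x (hTne x x.2)) (hB₂s v hv) (norm_nonneg v) hr0
  obtain ⟨hgc, hgprops⟩ := hauxT
  set g : ℂ → ℂ := fun u => ∏' x : T, (1 - c x * u) with hg_def
  have h1s₂ : (1:ℂ) ∈ s₂ := Metric.mem_closedBall_self hδ.le
  have hg1ne : g 1 ≠ 0 := (hgprops 1 h1s₂).1
  -- numerator
  have hpq : ‖p * q‖ < 1 := by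
    rw [norm_mul]; nlinarith [norm_nonneg p, norm_nonneg q]
  set B₁ : ℝ := (1 + ‖p * q‖) / 2 with hB₁_def
  have hB₁0 : 0 ≤ B₁ := by rw [hB₁_def]; positivity
  have hB₁1 : B₁ < 1 := by rw [hB₁_def]; linarith
  set s₁ : Set ℂ := Metric.closedBall (0:ℂ) B₁ with hs₁_def
  have hB₁s : ∀ v ∈ s₁, ‖v‖ ≤ B₁ := by
    intro v hv
    rwa [hs₁_def, Metric.mem_closedBall, dist_zero_right] at hv
  have hbound₁ : ∀ ij : ℕ × ℕ, ∀ v ∈ s₁, ‖c ij * v‖ ≤ B₁ := by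
    intro ij v hv
    rw [norm_mul]
    calc ‖c ij‖ * ‖v‖ ≤ 1 * B₁ := mul_le_mul (hc1 ij) (hB₁s v hv) (norm_nonneg v) zero_le_one
      _ = B₁ := one_mul _
  obtain ⟨hFc, hFprops⟩ := aux_tprod_one_sub c hc hB₁0 hB₁1 hbound₁ hB₁s
  have hFpoch : ∀ v : ℂ, poch2 v p q = ∏' ij : ℕ × ℕ, (1 - c ij * v) := fun v => rfl
  have hpqball : (p * q) ∈ Metric.ball (0:ℂ) B₁ := by
    rw [Metric.mem_ball, dist_zero_right, hB₁_def]; linarith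
  have hpqs₁ : (p * q) ∈ s₁ := by
    rw [hs₁_def]; exact Metric.ball_subset_closedBall hpqball
  have hnum : Filter.Tendsto (fun u : ℂ => poch2 (p*q/u) p q) (𝓝[≠] (1:ℂ))
      (𝓝 (poch2 (p*q) p q)) := by
    have hccA : ContinuousAt (fun v => ∏' ij : ℕ × ℕ, (1 - c ij * v)) (p*q) :=
      hFc.continuousAt (by rw [hs₁_def] at *; exact Metric.closedBall_mem_nhds_of_mem hpqball)
    have hdiv : Filter.Tendsto (fun u : ℂ => p*q/u) (𝓝[≠] (1:ℂ)) (𝓝 (p*q)) := by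
      have hca : ContinuousAt (fun u : ℂ => p*q/u) 1 :=
        ContinuousAt.div continuousAt_const continuousAt_id one_ne_zero
      have h2 : Filter.Tendsto (fun u : ℂ => p*q/u) (𝓝[≠] (1:ℂ)) (𝓝 (p*q/1)) :=
        hca.tendsto.mono_left nhdsWithin_le_nhds
      simpa using h2
    have h3 := hccA.tendsto.comp hdiv
    exact h3
  have hden : Filter.Tendsto g (𝓝[≠] (1:ℂ)) (𝓝 (g 1)) :=
    ((hgc.continuousAt (by rw [hs₂_def]; exact Metric.closedBall_mem_nhds _ hδ)).tendsto).mono_left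
      nhdsWithin_le_nhds
  have hsmem : s₂ ∈ 𝓝[≠] (1:ℂ) :=
    nhdsWithin_le_nhds (by rw [hs₂_def]; exact Metric.closedBall_mem_nhds _ hδ)
  have hev : (fun u : ℂ => (1 - u) * ellGamma u p q)
      =ᶠ[𝓝[≠] (1:ℂ)] fun u => poch2 (p*q/u) p q / g u := by
    filter_upwards [hsmem, self_mem_nhdsWithin] with u hus hu1
    have hu1' : u ≠ 1 := hu1
    have h1u : (1:ℂ) - u ≠ 0 := sub_ne_zero.mpr (fun h => hu1' h.symm)
    have hgm := (hgprops u hus).2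
    have hsingle : Multipliable ((fun ij : ℕ × ℕ => 1 - c ij * u) ∘ (↑) :
        ({((0:ℕ),(0:ℕ))} : Set (ℕ × ℕ)) → ℂ) := Multipliable.of_finite
    have h00 : (∏' x : ({((0:ℕ),(0:ℕ))} : Set (ℕ × ℕ)), (1 - c (x : ℕ × ℕ) * u)) = 1 - u := by
      rw [tprod_singleton ((0:ℕ),(0:ℕ)) (fun ij : ℕ × ℕ => 1 - c ij * u)]
      rw [hc_def]
      norm_num
    have hsplit : poch2 u p q = (1 - u) * g u := by
      rw [hFpoch u, ← Multipliable.tprod_mul_tprod_compl (f := fun ij : ℕ × ℕ => 1 - c ij * u) hsingle hgm,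
        h00]
    rw [show ellGamma u p q = poch2 (p * q / u) p q / poch2 u p q from rfl, hsplit,
      mul_div_assoc', mul_div_mul_left _ _ h1u]
  have hFpqne : poch2 (p*q) p q ≠ 0 := by
    rw [hFpoch]; exact (hFprops (p*q) hpqs₁).1
  have hval : g 1 = poch p p * poch q q * poch2 (p*q) p q := by
    have hg1 : g 1 = ∏' x : T, (1 - c (x : ℕ × ℕ)) :=
      tprod_congr (fun x => by rw [mul_one])
    rw [hg1, hT_def]
    exact g1_eq p q hp' hq'
  have hppqq : poch p p * poch q q ≠ 0 := by
    intro h0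
    apply hg1ne
    rw [hval, h0, zero_mul]
  have hfinal : poch2 (p*q) p q / g 1 = (poch p p * poch q q)⁻¹ := by
    rw [hval]
    rw [div_eq_iff (by intro h0; exact hg1ne (by rw [hval, h0]))]
    field_simp
    exact (div_self hppqq).symm
  have hlim := hnum.div hden hg1ne
  rw [hfinal] at hlim
  exact hlim.congr' hev.symm

end
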